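/- Let G be a 2-connected unit disk graph and F a 2-connected spanning subgraph of G with minimum total Euclidean edge length. If a vertex u of F has degree at least 3 and has two neighbors v, u' in F with ∠vuu' = π/3, then ‖uv‖ = ‖uu'‖ (so v, u, u' form an equilateral triangle together with the segment vu'). -/

import Mathlib

open scoped Classical
open EuclideanGeometry Real

noncomputable section

/-- Points in the Euclidean plane. -/
abbrev Pt := EuclideanSpace ℝ (Fin 2)

/-- A graph is `k`-connected if it has more than `k` vertices and remains connected
after deleting any fewer than `k` vertices. -/
def KConnected {V : Type*} [Fintype V] (k : ℕ) (G : SimpleGraph V) : Prop :=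
  k < Fintype.card V ∧ ∀ S : Finset V, S.card < k → (G.induce {v : V | v ∉ S}).Connected

/-- `G` is a unit disk graph realized by the (injective) point placement `p`:
two distinct vertices are adjacent iff their Euclidean distance is at most 1. -/
def IsUnitDiskGraph {V : Type*} (G : SimpleGraph V) (p : V → Pt) : Prop :=
  Function.Injective p ∧ ∀ u v, G.Adj u v ↔ u ≠ v ∧ dist (p u) (p v) ≤ 1

/-- Euclidean length of an edge. -/
def edgeLen {V : Type*} (p : V → Pt) : Sym2 V → ℝ :=
  Sym2.lift ⟨fun a b => dist (p a) (p b), fun a b => dist_comm (p a) (p b)⟩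

/-- Total Euclidean edge length of a graph. -/
def glen {V : Type*} [Fintype V] (p : V → Pt) (G : SimpleGraph V) : ℝ :=
  ∑ e ∈ G.edgeFinset, edgeLen p e

/-- `F` is a minimum-length `k`-connected spanning subgraph (`k`-MSS) of `G`. -/
def IsMSS {V : Type*} [Fintype V] (k : ℕ) (p : V → Pt) (G F : SimpleGraph V) : Prop :=
  F ≤ G ∧ KConnected k F ∧
    ∀ F' : SimpleGraph V, F' ≤ G → KConnected k F' → glen p F ≤ glen p F'

section Helpers

variable {V : Type*}

/-- Transfer a walk in `K` whose support lies in `s` to reachability in `K'.induce s`. -/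
lemma reach_induce_of_walk {K K' : SimpleGraph V} (hKK' : K ≤ K') {s : Set V} :
    ∀ {x y : V} (w : K.Walk x y), (∀ z ∈ w.support, z ∈ s) → ∀ (hx : x ∈ s) (hy : y ∈ s),
      (K'.induce s).Reachable ⟨x, hx⟩ ⟨y, hy⟩ := by
  intro x y w
  induction w with
  | nil => intro _ hx hy; rfl
  | @cons x b y h p ih =>
    intro hsup hx hy
    have hb : b ∈ s := hsup _ (by simp)
    have step : (K'.induce s).Adj ⟨x, hx⟩ ⟨b, hb⟩ := hKK' h
    exact (step.reachable).trans (ih (fun z hz => hsup z (by simp [hz])) hb hy)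

lemma connected_transfer {K K' : SimpleGraph V} {s : Set V} (h : (K.induce s).Connected)
    (h2 : ∀ x y (hx : x ∈ s) (hy : y ∈ s), K.Adj x y →
      (K'.induce s).Reachable ⟨x, hx⟩ ⟨y, hy⟩) :
    (K'.induce s).Connected := by
  haveI : Nonempty s := h.nonempty
  refine ⟨fun a b => ?_⟩
  obtain ⟨w⟩ := h.preconnected a b
  induction w with
  | nil => rfl
  | @cons a b c hab p ih =>
    have : K.Adj a.1 b.1 := hab
    exact (h2 a.1 b.1 a.2 b.2 this).trans ih

/-- From 2-connectivity, after deleting all edges at `w`, any two vertices distinct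
from `w` remain reachable. -/
lemma reach_del_of_twoconn [Fintype V] {F : SimpleGraph V} (hF : KConnected 2 F)
    (w x y : V) (hx : x ≠ w) (hy : y ≠ w) :
    (F.deleteEdges {e | w ∈ e}).Reachable x y := by
  have hc := hF.2 {w} (by simp)
  have hx' : x ∈ {v : V | v ∉ ({w} : Finset V)} := by simp [hx]
  have hy' : y ∈ {v : V | v ∉ ({w} : Finset V)} := by simp [hy]
  have hr := hc.preconnected ⟨x, hx'⟩ ⟨y, hy'⟩
  let φ : F.induce {v : V | v ∉ ({w} : Finset V)} →g F.deleteEdges {e | w ∈ e} :=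
    { toFun := Subtype.val
      map_rel' := by
        rintro ⟨a, ha⟩ ⟨b, hb⟩ hab
        have hab' : F.Adj a b := hab
        simp only [Set.mem_setOf_eq, Finset.mem_singleton] at ha hb
        rw [SimpleGraph.deleteEdges_adj]
        refine ⟨hab', ?_⟩
        simp only [Set.mem_setOf_eq, Sym2.mem_iff]
        rintro (rfl | rfl) <;> tauto }
  exact hr.map φ

lemma glen_delete [Fintype V] (p : V → Pt) (K : SimpleGraph V) (e : Sym2 V)
    (he : e ∈ K.edgeSet) :
    glen p (K.deleteEdges {e}) = glen p K - edgeLen p e := by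
  unfold glen
  have h1 : (K.deleteEdges {e}).edgeFinset = K.edgeFinset.erase e := by
    ext f
    simp [SimpleGraph.edgeSet_deleteEdges, Finset.mem_erase, and_comm]
  rw [← Finset.sum_erase_eq_sub (by simpa using he)]
  exact Finset.sum_congr (by convert h1) (fun _ _ => rfl)

lemma glen_eq [Fintype V] (p : V → Pt) (G : SimpleGraph V) (s : Finset (Sym2 V))
    (h : ∀ e, e ∈ s ↔ e ∈ G.edgeSet) : glen p G = ∑ e ∈ s, edgeLen p e := by
  unfold glen
  exact Finset.sum_congr (by ext f; simp [SimpleGraph.mem_edgeFinset, h]) (fun _ _ => rfl)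

lemma glen_sup_single [Fintype V] (p : V → Pt) (K : SimpleGraph V) {x y : V} (hxy : x ≠ y)
    (he : s(x, y) ∉ K.edgeSet) :
    glen p (K ⊔ SimpleGraph.fromEdgeSet {s(x, y)}) = glen p K + edgeLen p s(x, y) := by
  rw [glen_eq p (K ⊔ SimpleGraph.fromEdgeSet {s(x, y)}) (insert s(x, y) K.edgeFinset) ?_]
  · rw [Finset.sum_insert (by simpa using he), add_comm,
      (glen_eq p K K.edgeFinset (by simp)).symm]
  · intro e
    simp only [Finset.mem_insert, SimpleGraph.mem_edgeFinset, SimpleGraph.edgeSet_sup,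
      SimpleGraph.edgeSet_fromEdgeSet, Set.mem_union, Set.mem_diff, Set.mem_singleton_iff,
      Set.mem_setOf_eq]
    constructor
    · rintro (rfl | h)
      · exact Or.inr ⟨rfl, by simp [hxy]⟩
      · exact Or.inl h
    · rintro (h | ⟨rfl, -⟩)
      · exact Or.inr h
      · exact Or.inl rfl

end Helpers

section Key

lemma key {V : Type*} [Fintype V] (G F : SimpleGraph V)
    (p : V → Pt) (hudg : IsUnitDiskGraph G p)
    (hF : IsMSS 2 p G F) (u v u' : V) (hdeg : 3 ≤ F.degree u)
    (huv : F.Adj u v) (huu' : F.Adj u u') (hne : v ≠ u')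
    (hang : ∠ (p v) (p u) (p u') = π / 3)
    (hlt : dist (p u) (p v) < dist (p u) (p u')) : False := by
  classical
  obtain ⟨hFG, hKC, hmin⟩ := hF
  obtain ⟨hcard, hconn⟩ := hKC
  have hinj := hudg.1
  have huvne : u ≠ v := huv.ne
  have huu'ne : u ≠ u' := huu'.ne
  set a := dist (p u) (p v) with ha_def
  set b := dist (p u) (p u') with hb_def
  set c := dist (p v) (p u') with hc_def
  have ha0 : 0 < a := dist_pos.2 fun h => huvne (hinj h)
  have hb1 : b ≤ 1 := ((hudg.2 u u').1 (hFG huu')).2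
  have hlaw := EuclideanGeometry.law_cos (p v) (p u) (p u')
  rw [hang, Real.cos_pi_div_three] at hlaw
  have hcb : c < b := by
    have h1 : dist (p v) (p u) = a := dist_comm (p v) (p u)
    have h2 : dist (p u') (p u) = b := dist_comm (p u') (p u)
    rw [h1, h2] at hlaw
    nlinarith [dist_nonneg (x := p v) (y := p u'), ha0, hlt]
  have hc1 : c ≤ 1 := le_trans hcb.le hb1
  have hGvu' : G.Adj v u' := (hudg.2 v u').2 ⟨hne, hc1⟩
  set Hv := F.deleteEdges ({s(u, u')} ∪ {e : Sym2 V | v ∈ e}) with hHv_def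
  have hHvAdj : ∀ z t : V, F.Adj z t → z ≠ v → t ≠ v → s(z, t) ≠ s(u, u') → Hv.Adj z t := by
    intro z t h hz ht hs
    rw [hHv_def, SimpleGraph.deleteEdges_adj]
    refine ⟨h, ?_⟩
    rintro (hm | hm)
    · exact hs hm
    · rcases Sym2.mem_iff.1 hm with rfl | rfl
      · exact hz rfl
      · exact ht rfl
  have hHvF : Hv ≤ F := SimpleGraph.deleteEdges_le _
  have hvno : ∀ z : V, ¬ Hv.Adj z v := by
    intro z h
    rw [hHv_def, SimpleGraph.deleteEdges_adj] at h
    exact h.2 (Or.inr (by simp))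
  have hreachv : ∀ r : V, Hv.Reachable r v → r = v := by
    intro r h
    obtain ⟨w⟩ := h.symm
    cases w with
    | nil => rfl
    | cons h' p' => exact absurd h'.symm (hvno _)
  -- third neighbor
  have hsubN : ({v, u'} : Finset V) ⊆ F.neighborFinset u := by
    intro z hz
    rcases Finset.mem_insert.1 hz with rfl | hz
    · exact (SimpleGraph.mem_neighborFinset _ _ _).2 huv
    · rw [Finset.mem_singleton] at hz; subst hz
      exact (SimpleGraph.mem_neighborFinset _ _ _).2 huu'
  have hpos : 0 < (F.neighborFinset u \ {v, u'}).card := by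
    rw [Finset.card_sdiff_of_subset hsubN]
    have h2 : ({v, u'} : Finset V).card = 2 := Finset.card_pair hne
    have h3 : 3 ≤ (F.neighborFinset u).card := hdeg
    omega
  obtain ⟨x, hx⟩ := Finset.card_pos.1 hpos
  rw [Finset.mem_sdiff] at hx
  have hux : F.Adj u x := (SimpleGraph.mem_neighborFinset _ _ _).1 hx.1
  have hxv : x ≠ v := fun h => hx.2 (by simp [h])
  have hxu' : x ≠ u' := fun h => hx.2 (by simp [h])
  have hxu : x ≠ u := hux.ne'
  have hHvux : Hv.Adj u x := by
    refine hHvAdj u x hux huvne hxv ?_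
    intro hm
    rcases Sym2.eq_iff.1 hm with ⟨-, h2⟩ | ⟨h2, -⟩
    · exact hxu' h2
    · exact huu'ne h2
  have hvnu : v ≠ u := huvne.symm
  by_cases hcase : Hv.Reachable u u'
  · -- Case I : replace uu' by vu'
    set F' := F.deleteEdges {s(u, u')} ⊔ SimpleGraph.fromEdgeSet {s(v, u')} with hF'_def
    have hHvF' : Hv ≤ F' := by
      intro z t h
      rw [hHv_def, SimpleGraph.deleteEdges_adj] at h
      refine (SimpleGraph.sup_adj _ _ _ _).2 (Or.inl ?_)
      rw [SimpleGraph.deleteEdges_adj]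
      exact ⟨h.1, fun hm => h.2 (Or.inl hm)⟩
    have hF'G : F' ≤ G := by
      refine sup_le ((SimpleGraph.deleteEdges_le _).trans hFG) ?_
      intro z t hzt
      rw [SimpleGraph.fromEdgeSet_adj] at hzt
      rcases Sym2.eq_iff.1 (Set.mem_singleton_iff.1 hzt.1) with ⟨rfl, rfl⟩ | ⟨rfl, rfl⟩
      · exact hGvu'
      · exact hGvu'.symm
    have hKC' : KConnected 2 F' := by
      refine ⟨hcard, ?_⟩
      intro S hS
      refine connected_transfer (hconn S hS) ?_
      intro x' y' hx' hy' hxy'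
      by_cases he : s(x', y') = s(u, u')
      · have main : ∀ (hus : u ∈ {z : V | z ∉ S}) (hu's : u' ∈ {z : V | z ∉ S}),
            (F'.induce {z : V | z ∉ S}).Reachable ⟨u, hus⟩ ⟨u', hu's⟩ := by
          intro hus hu's
          by_cases hvs : v ∈ ({z : V | z ∉ S} : Set V)
          · have a1 : (F'.induce {z : V | z ∉ S}).Adj ⟨u, hus⟩ ⟨v, hvs⟩ := by
              show F'.Adj u v
              refine (SimpleGraph.sup_adj _ _ _ _).2 (Or.inl ?_)
              rw [SimpleGraph.deleteEdges_adj]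
              refine ⟨huv, ?_⟩
              intro hm
              rcases Sym2.eq_iff.1 (Set.mem_singleton_iff.1 hm) with ⟨-, h2⟩ | ⟨h2, -⟩
              · exact hne h2
              · exact huu'ne h2
            have a2 : (F'.induce {z : V | z ∉ S}).Adj ⟨v, hvs⟩ ⟨u', hu's⟩ := by
              show F'.Adj v u'
              exact (SimpleGraph.sup_adj _ _ _ _).2
                (Or.inr ((SimpleGraph.fromEdgeSet_adj _).2 ⟨rfl, hne⟩))
            exact a1.reachable.trans a2.reachable
          · have hSv : ∀ z ∈ S, z = v := by
              intro z hz
              have h1 : S.card ≤ 1 := by omega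
              exact Finset.card_le_one.1 h1 z hz v (by simpa using hvs)
            obtain ⟨w⟩ := hcase
            refine reach_induce_of_walk hHvF' w ?_ hus hu's
            intro z hz
            have hrz : Hv.Reachable u z := ⟨w.takeUntil z hz⟩
            simp only [Set.mem_setOf_eq]
            intro hzS
            exact huvne (hreachv u (by rwa [hSv z hzS] at hrz))
        rcases Sym2.eq_iff.1 he with ⟨rfl, rfl⟩ | ⟨rfl, rfl⟩
        · exact main hx' hy'
        · exact (main hy' hx').symm
      · refine SimpleGraph.Adj.reachable ?_
        show F'.Adj x' y'
        refine (SimpleGraph.sup_adj _ _ _ _).2 (Or.inl ?_)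
        rw [SimpleGraph.deleteEdges_adj]
        exact ⟨hxy', by simpa using he⟩
    have hbE : s(u, u') ∈ F.edgeSet := huu'
    have hlen_b : edgeLen p s(u, u') = b := rfl
    have hlen_c : edgeLen p s(v, u') = c := rfl
    have hd : glen p (F.deleteEdges {s(u, u')}) = glen p F - b := by
      rw [glen_delete p F _ hbE, hlen_b]
    have hglt : glen p F' < glen p F := by
      by_cases hin : s(v, u') ∈ (F.deleteEdges {s(u, u')}).edgeSet
      · have heq : F' = F.deleteEdges {s(u, u')} := by
          rw [hF'_def]
          refine sup_eq_left.2 ?_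
          intro z t hzt
          rw [SimpleGraph.fromEdgeSet_adj] at hzt
          have h2 : s(z, t) ∈ (F.deleteEdges {s(u, u')}).edgeSet := by
            rw [Set.mem_singleton_iff.1 hzt.1]; exact hin
          exact h2
        rw [heq, hd]
        linarith
      · rw [hF'_def, glen_sup_single p _ hne hin, hd, hlen_c]
        linarith
    linarith [hmin F' hF'G hKC']
  · -- Case II
    have hAB : ∀ z : V, Hv.Reachable u z → Hv.Reachable u' z → False := fun z h1 h2 =>
      hcase (h1.trans h2.symm)
    have absorb : ∀ r : V, r ≠ v →
        (∀ y : V, y ≠ u → Hv.Reachable r y → ¬ F.Adj y v) →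
        ∀ z : V, (F.deleteEdges {e : Sym2 V | u ∈ e}).Reachable r z → Hv.Reachable r z := by
      intro r hrv hno z hz
      obtain ⟨w⟩ := hz
      have main : ∀ (z1 z2 : V) (w : (F.deleteEdges {e : Sym2 V | u ∈ e}).Walk z1 z2),
          Hv.Reachable r z1 → Hv.Reachable r z2 := by
        intro z1 z2 w
        induction w with
        | nil => exact id
        | @cons p1 q1 t1 hadj pw ih =>
          intro h1
          apply ih
          rw [SimpleGraph.deleteEdges_adj] at hadj
          have hpu : p1 ≠ u := by
            intro h; exact hadj.2 (by rw [h]; simp)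
          have hqu : q1 ≠ u := by
            intro h; exact hadj.2 (by rw [h]; simp)
          have hpv : p1 ≠ v := by
            intro h; rw [h] at h1; exact hrv (hreachv r h1)
          by_cases hqv : q1 = v
          · rw [hqv] at hadj
            exact absurd hadj.1 (hno p1 hpu h1)
          · refine h1.trans (SimpleGraph.Adj.reachable ?_)
            refine hHvAdj p1 q1 hadj.1 hpv hqv ?_
            intro hm
            rcases Sym2.eq_iff.1 hm with ⟨h2, -⟩ | ⟨-, h2⟩
            · exact hpu h2
            · exact hqu h2
      exact main r z w (SimpleGraph.Reachable.refl r)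
    have hyex : ∃ y : V, F.Adj y v ∧ Hv.Reachable u' y := by
      by_contra hno
      push_neg at hno
      have h1 := absorb u' hne.symm (fun y _ hy hadj => hno y hadj hy) v
        (reach_del_of_twoconn ⟨hcard, hconn⟩ u u' v huu'ne.symm hvnu)
      exact hne.symm (hreachv u' h1)
    obtain ⟨y, hyv, hyB⟩ := hyex
    have hyu : y ≠ u := by
      intro h; rw [h] at hyB; exact hcase hyB.symm
    by_cases hva : ∃ aa : V, aa ≠ u ∧ Hv.Reachable u aa ∧ F.Adj v aa
    · -- Case II.b : delete edge uv
      obtain ⟨aa, haau, haaA, hvaa⟩ := hva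
      have haav : aa ≠ v := fun h => (h ▸ hvaa).ne rfl
      set F'' := F.deleteEdges {s(u, v)} with hF''_def
      have hHvF'' : Hv ≤ F'' := by
        intro z t h
        rw [hHv_def, SimpleGraph.deleteEdges_adj] at h
        rw [hF''_def, SimpleGraph.deleteEdges_adj]
        refine ⟨h.1, ?_⟩
        intro hm
        refine h.2 (Or.inr ?_)
        rw [Set.mem_singleton_iff.1 hm]
        simp
      have hF''G : F'' ≤ G := (SimpleGraph.deleteEdges_le _).trans hFG
      have hKC'' : KConnected 2 F'' := by
        refine ⟨hcard, ?_⟩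
        intro S hS
        refine connected_transfer (hconn S hS) ?_
        intro x' y' hx' hy' hxy'
        by_cases he : s(x', y') = s(u, v)
        · have main : ∀ (hus : u ∈ {z : V | z ∉ S}) (hvs : v ∈ {z : V | z ∉ S}),
              (F''.induce {z : V | z ∉ S}).Reachable ⟨u, hus⟩ ⟨v, hvs⟩ := by
            intro hus hvs
            by_cases hSA : ∀ t ∈ S, ¬ Hv.Reachable u t
            · obtain ⟨w⟩ := haaA
              have hsupp : ∀ z ∈ w.support, z ∈ {z : V | z ∉ S} := by
                intro z hz
                have hrz : Hv.Reachable u z := ⟨w.takeUntil z hz⟩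
                simp only [Set.mem_setOf_eq]
                intro hzS
                exact hSA z hzS hrz
              have haas : aa ∈ {z : V | z ∉ S} := hsupp aa w.end_mem_support
              have r1 := reach_induce_of_walk hHvF'' w hsupp hus haas
              have a2 : (F''.induce {z : V | z ∉ S}).Adj ⟨aa, haas⟩ ⟨v, hvs⟩ := by
                show F''.Adj aa v
                rw [hF''_def, SimpleGraph.deleteEdges_adj]
                refine ⟨hvaa.symm, ?_⟩
                intro hm
                rcases Sym2.eq_iff.1 (Set.mem_singleton_iff.1 hm) with ⟨h2, -⟩ | ⟨-, h2⟩
                · exact haau h2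
                · exact hvnu h2
              exact r1.trans a2.reachable
            · push_neg at hSA
              obtain ⟨t0, ht0S, ht0A⟩ := hSA
              have hSB : ∀ t ∈ S, ¬ Hv.Reachable u' t := by
                intro t htS hrt
                have h1 : S.card ≤ 1 := by omega
                have h2 : t = t0 := Finset.card_le_one.1 h1 t htS t0 ht0S
                rw [h2] at hrt
                exact hAB t0 ht0A hrt
              have hu's : u' ∈ {z : V | z ∉ S} := by
                simp only [Set.mem_setOf_eq]
                intro hu'S
                exact hSB u' hu'S (SimpleGraph.Reachable.refl u')
              have a1 : (F''.induce {z : V | z ∉ S}).Adj ⟨u, hus⟩ ⟨u', hu's⟩ := by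
                show F''.Adj u u'
                rw [hF''_def, SimpleGraph.deleteEdges_adj]
                refine ⟨huu', ?_⟩
                intro hm
                rcases Sym2.eq_iff.1 (Set.mem_singleton_iff.1 hm) with ⟨-, h2⟩ | ⟨h2, -⟩
                · exact hne h2.symm
                · exact huvne h2
              obtain ⟨w⟩ := hyB
              have hsupp : ∀ z ∈ w.support, z ∈ {z : V | z ∉ S} := by
                intro z hz
                have hrz : Hv.Reachable u' z := ⟨w.takeUntil z hz⟩
                simp only [Set.mem_setOf_eq]
                intro hzS
                exact hSB z hzS hrz
              have hys : y ∈ {z : V | z ∉ S} := hsupp y w.end_mem_support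
              have r2 := reach_induce_of_walk hHvF'' w hsupp hu's hys
              have a3 : (F''.induce {z : V | z ∉ S}).Adj ⟨y, hys⟩ ⟨v, hvs⟩ := by
                show F''.Adj y v
                rw [hF''_def, SimpleGraph.deleteEdges_adj]
                refine ⟨hyv, ?_⟩
                intro hm
                rcases Sym2.eq_iff.1 (Set.mem_singleton_iff.1 hm) with ⟨h2, -⟩ | ⟨h2, -⟩
                · exact hyu h2
                · exact hyv.ne h2
              exact (a1.reachable.trans r2).trans a3.reachable
          rcases Sym2.eq_iff.1 he with ⟨rfl, rfl⟩ | ⟨rfl, rfl⟩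
          · exact main hx' hy'
          · exact (main hy' hx').symm
        · refine SimpleGraph.Adj.reachable ?_
          show F''.Adj x' y'
          rw [hF''_def, SimpleGraph.deleteEdges_adj]
          exact ⟨hxy', by simpa using he⟩
      have hlen_a : edgeLen p s(u, v) = a := rfl
      have huvE : s(u, v) ∈ F.edgeSet := huv
      have hglt : glen p F'' < glen p F := by
        rw [hF''_def, glen_delete p F _ huvE, hlen_a]
        linarith
      linarith [hmin F'' hF''G hKC'']
    · -- Case II.a
      have h1 := absorb x hxv (fun y' hy'u hy'r hadj =>
        hva ⟨y', hy'u, (SimpleGraph.Adj.reachable hHvux).trans hy'r, hadj.symm⟩) v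
        (reach_del_of_twoconn ⟨hcard, hconn⟩ u x v hxu hvnu)
      exact hxv (hreachv x h1)

end Key

/-- In a minimum-length 2-connected spanning subgraph `F` of a 2-connected unit disk
graph, if a vertex `u` of degree at least 3 has two neighbors `v`, `u'` with
`∠vuu' = π/3`, then `‖uv‖ = ‖uu'‖`. -/
theorem mss2_equilateral {V : Type*} [Fintype V] (G F : SimpleGraph V)
    (p : V → Pt) (hudg : IsUnitDiskGraph G p) (hG : KConnected 2 G)
    (hF : IsMSS 2 p G F) (u v u' : V) (hdeg : 3 ≤ F.degree u)
    (huv : F.Adj u v) (huu' : F.Adj u u') (hne : v ≠ u')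
    (hang : ∠ (p v) (p u) (p u') = π / 3) :
    dist (p u) (p v) = dist (p u) (p u') := by
  by_contra hne'
  rcases lt_or_gt_of_ne hne' with h | h
  · exact (key G F p hudg hF u v u' hdeg huv huu' hne hang h).elim
  · exact (key G F p hudg hF u u' v hdeg huu' huv hne.symm
      (by rw [EuclideanGeometry.angle_comm]; exact hang) h).elim

end
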